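/- For any two non-singular probability measures F₁ and F₂ on ℝ, there exist a > 0, u ∈ ℝ, θ ∈ (0,1] and a probability measure H on ℝ such that F₁ ∗ F₂ = (1 − θ)·H + θ·(K_a ∗ δ_u), where ∗ denotes convolution of measures and δ_u is the Dirac measure at u. -/

import Mathlib

open MeasureTheory Set Filter
open scoped ENNReal Topology

/-- The triangular density with parameter `a`. -/
noncomputable def triDensity (a : ℝ) (x : ℝ) : ℝ :=
  if |x| ≤ a then (1 / a) * (1 - |x| / a) else 0

/-- `K_a`, the probability measure on `ℝ` with the triangular density `κ_a`. -/
noncomputable def triMeasure (a : ℝ) : Measure ℝ :=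
  volume.withDensity fun x => ENNReal.ofReal (triDensity a x)

/-- The total mass of the absolutely continuous part (w.r.t. Lebesgue measure) of a measure
on `ℝ` in its Lebesgue decomposition. -/
noncomputable def acMass (μ : Measure ℝ) : ℝ :=
  ((volume.withDensity (μ.rnDeriv volume)) Set.univ).toReal

lemma tri_meas (a : ℝ) : Measurable (triDensity a) := by
  unfold triDensity
  exact Measurable.ite (measurableSet_le (by fun_prop) measurable_const) (by fun_prop)
    measurable_const

lemma tri_nonneg {a : ℝ} (ha : 0 < a) (x : ℝ) : 0 ≤ triDensity a x := by
  unfold triDensity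
  split
  · have : |x| / a ≤ 1 := (div_le_one ha).2 (by assumption)
    have h0 : 0 ≤ 1 - |x| / a := by linarith
    positivity
  · exact le_refl 0

lemma tri_eq_indicator {a : ℝ} :
    triDensity a = (Icc (-a) a).indicator (fun x => (1/a) * (1 - |x|/a)) := by
  funext x
  simp only [triDensity, indicator, mem_Icc, ← abs_le]

lemma tri_integral {a : ℝ} (ha : 0 < a) : ∫ x, triDensity a x = 1 := by
  rw [tri_eq_indicator, MeasureTheory.integral_indicator measurableSet_Icc,
    MeasureTheory.integral_Icc_eq_integral_Ioc, ← intervalIntegral.integral_of_le (by linarith)]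
  rw [← intervalIntegral.integral_add_adjacent_intervals (b := 0) (f := fun x => 1 / a * (1 - |x| / a))
    (((continuous_const.mul ((continuous_const.sub (continuous_abs.div_const a)))).intervalIntegrable _ _))
    (((continuous_const.mul ((continuous_const.sub (continuous_abs.div_const a)))).intervalIntegrable _ _))]
  have key : ∀ b c : ℝ, ∫ x in b..c, (1/a) * (1 - x/a) = (1/a) * ((c - b) - ((c^2 - b^2)/2)/a) := by
    intro b c
    rw [intervalIntegral.integral_const_mul]
    congr 1
    rw [intervalIntegral.integral_sub intervalIntegrable_const
      ((continuous_id'.div_const a).intervalIntegrable _ _),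
      intervalIntegral.integral_div, integral_id,
      intervalIntegral.integral_const]
    simp
  have h1 : ∫ x in (-a)..0, (1/a) * (1 - |x|/a) = ∫ x in (-a)..0, (1/a) * (1 - (-x)/a) := by
    apply intervalIntegral.integral_congr
    intro x hx
    rw [uIcc_of_le (by linarith)] at hx
    show (1/a) * (1 - |x|/a) = _
    rw [abs_of_nonpos (hx.2)]
  have h2 : ∫ x in (0:ℝ)..a, (1/a) * (1 - |x|/a) = ∫ x in (0:ℝ)..a, (1/a) * (1 - x/a) := by
    apply intervalIntegral.integral_congr
    intro x hx
    rw [uIcc_of_le (by linarith)] at hx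
    show (1/a) * (1 - |x|/a) = _
    rw [abs_of_nonneg (hx.1)]
  have h1' : ∫ x in (-a)..0, (1/a) * (1 - (-x)/a) = ∫ x in (-a)..0, ((1/a) * (1 + x/a)) := by
    congr 1; funext x; ring
  rw [h1, h2, h1', key]
  have key2 : ∫ x in (-a)..0, ((1/a) * (1 + x/a)) = (1/a) * ((0 - (-a)) + ((0^2 - (-a)^2)/2)/a) := by
    rw [intervalIntegral.integral_const_mul]
    congr 1
    rw [intervalIntegral.integral_add intervalIntegrable_const
      ((continuous_id'.div_const a).intervalIntegrable _ _),
      intervalIntegral.integral_div, integral_id,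
      intervalIntegral.integral_const]
    simp
  rw [key2]
  field_simp
  ring

lemma tri_integrable {a : ℝ} (ha : 0 < a) : Integrable (triDensity a) := by
  rw [tri_eq_indicator]
  exact ((continuous_const.mul ((continuous_const.sub
    (continuous_abs.div_const a)))).integrableOn_Icc).integrable_indicator measurableSet_Icc

lemma tri_prob {a : ℝ} (ha : 0 < a) : IsProbabilityMeasure (triMeasure a) := by
  constructor
  rw [triMeasure, withDensity_apply _ MeasurableSet.univ, Measure.restrict_univ,
    ← ofReal_integral_eq_lintegral_ofReal (tri_integrable ha)
      (Filter.Eventually.of_forall (tri_nonneg ha)), tri_integral ha, ENNReal.ofReal_one]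

instance tri_sfinite (a : ℝ) : SFinite (triMeasure a) := by
  rw [triMeasure]; infer_instance

lemma my_conv_apply (μ ν : Measure ℝ) [SFinite μ] [SFinite ν] {S : Set ℝ}
    (hS : MeasurableSet S) :
    (μ.conv ν) S = ∫⁻ x, ν {y | x + y ∈ S} ∂μ := by
  rw [Measure.conv, Measure.map_apply (by fun_prop) hS,
    Measure.prod_apply (by exact measurable_add hS)]
  rfl

lemma triConvDirac_apply {a : ℝ} (ha : 0 < a) (u : ℝ) {S : Set ℝ} (hS : MeasurableSet S) :
    ((triMeasure a).conv (Measure.dirac u)) S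
      = ∫⁻ z, (S.indicator (fun _ => (1:ℝ≥0∞)) z) * ENNReal.ofReal (triDensity a (z - u)) := by
  rw [my_conv_apply _ _ hS]
  have h1 : ∀ x : ℝ, (Measure.dirac u) {y | x + y ∈ S}
      = S.indicator (fun _ => (1:ℝ≥0∞)) (x + u) := by
    intro x
    have hm : MeasurableSet {y : ℝ | x + y ∈ S} := by
      have he : {y : ℝ | x + y ∈ S} = (fun y => x + y) ⁻¹' S := rfl
      rw [he]; exact (measurable_const_add x) hS
    rw [Measure.dirac_apply' _ hm]
    simp [Set.indicator]
  simp_rw [h1]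
  rw [triMeasure, lintegral_withDensity_eq_lintegral_mul _ (by exact (tri_meas a).ennreal_ofReal)
    (by exact Measurable.indicator measurable_const hS |>.comp (measurable_id.add measurable_const))]
  have := MeasureTheory.lintegral_add_right_eq_self
    (μ := (volume : Measure ℝ))
    (f := fun z => (S.indicator (fun _ => (1:ℝ≥0∞)) z) * ENNReal.ofReal (triDensity a (z - u))) u
  rw [← this]
  congr 1
  funext x
  simp [mul_comm]

lemma exists_density_piece (μ : Measure ℝ) (h : 0 < acMass μ) :
    ∃ (c x : ℝ) (A : Set ℝ), 0 < c ∧ MeasurableSet A ∧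
      (ENNReal.ofReal c) • volume.restrict A ≤ μ ∧
      Tendsto (fun r => volume (A ∩ Metric.closedBall x r) / volume (Metric.closedBall x r))
        (𝓝[>] 0) (𝓝 1) := by
  set f := μ.rnDeriv volume with hf
  have hfm : Measurable f := μ.measurable_rnDeriv volume
  have h0 : ∫⁻ x, f x ≠ 0 := by
    intro hc
    rw [acMass, withDensity_apply _ MeasurableSet.univ, Measure.restrict_univ] at h
    rw [hc] at h
    simp at h
  have hne : volume {x | f x ≠ 0} ≠ 0 := by
    intro hc
    apply h0
    rw [lintegral_eq_zero_iff hfm]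
    exact hc
  have hcover : {x | f x ≠ 0} ⊆ ⋃ n : ℕ, {x | ((n:ℝ≥0∞) + 1)⁻¹ ≤ f x} := by
    intro x hx
    obtain ⟨n, hn⟩ := ENNReal.exists_inv_nat_lt hx
    refine mem_iUnion.2 ⟨n, ?_⟩
    refine le_trans ?_ hn.le
    simp only [ENNReal.inv_le_inv]
    exact le_add_of_nonneg_right zero_le_one |>.trans (by norm_num)
  have : ∃ n : ℕ, volume {x | ((n:ℝ≥0∞) + 1)⁻¹ ≤ f x} ≠ 0 := by
    by_contra hc
    push_neg at hc
    apply hne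
    refine le_antisymm ?_ zero_le
    refine le_trans (measure_mono hcover) ?_
    rw [show (0:ℝ≥0∞) = ∑' n:ℕ, 0 by simp]
    refine le_trans (measure_iUnion_le _) ?_
    exact le_of_eq (by simp [hc])
  obtain ⟨n, hn⟩ := this
  set A := {x | ((n:ℝ≥0∞) + 1)⁻¹ ≤ f x} with hA
  have hAm : MeasurableSet A := hfm measurableSet_Ici
  obtain ⟨x, hxA, hx⟩ := Measure.exists_mem_of_measure_ne_zero_of_ae hn
    (Besicovitch.ae_tendsto_measure_inter_div (volume : Measure ℝ) A)
  refine ⟨((n:ℝ)+1)⁻¹, x, A, by positivity, hAm, ?_, hx⟩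
  refine le_trans ?_ (Measure.withDensity_rnDeriv_le μ volume)
  refine Measure.le_iff.2 fun S hS => ?_
  rw [Measure.smul_apply, Measure.restrict_apply hS, withDensity_apply _ hS, smul_eq_mul]
  have hc : ENNReal.ofReal (((n:ℝ)+1)⁻¹) = ((n:ℝ≥0∞) + 1)⁻¹ := by
    rw [ENNReal.ofReal_inv_of_pos (by positivity)]
    congr 1
    rw [ENNReal.ofReal_add (by positivity) zero_le_one]
    simp
  rw [hc]
  calc ((n:ℝ≥0∞) + 1)⁻¹ * volume (S ∩ A)
      = ∫⁻ _ in S ∩ A, ((n:ℝ≥0∞) + 1)⁻¹ ∂volume := by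
        rw [setLIntegral_const, mul_comm]
    _ ≤ ∫⁻ x in S ∩ A, f x ∂volume := setLIntegral_mono hfm fun x hx => hx.2
    _ ≤ ∫⁻ x in S, f x ∂volume := lintegral_mono_set inter_subset_left

lemma tri_scale {r : ℝ} (hr : 0 < r) (y : ℝ) :
    r^2 * triDensity r y = max (r - |y|) 0 := by
  rw [triDensity]
  split
  · rw [max_eq_left (by linarith)]
    field_simp
  · rw [max_eq_right (by push_neg at *; linarith)]
    ring

lemma pointwise_bound {r x₁ x₂ : ℝ} (hr : 0 < r) {A C : Set ℝ} (hC : MeasurableSet C)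
    (hA1 : A ⊆ Icc (x₁ - r) (x₁ + r)) (hC1 : C ⊆ Icc (x₂ - r) (x₂ + r))
    (hA2 : ENNReal.ofReal (3/2*r) ≤ volume A) (hC2 : ENNReal.ofReal (3/2*r) ≤ volume C) :
    ENNReal.ofReal (r - |x₁ - x₂|) ≤ volume (C ∩ A) := by
  set lo := min x₁ x₂ - r
  set hi := max x₁ x₂ + r
  have hU : A ∪ C ⊆ Icc lo hi := by
    apply union_subset
    · exact hA1.trans (Icc_subset_Icc (by simp only [lo]; linarith [min_le_left x₁ x₂])
        (by simp only [hi]; linarith [le_max_left x₁ x₂]))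
    · exact hC1.trans (Icc_subset_Icc (by simp only [lo]; linarith [min_le_right x₁ x₂])
        (by simp only [hi]; linarith [le_max_right x₁ x₂]))
  have hvolU : volume (A ∪ C) ≤ ENNReal.ofReal (|x₁ - x₂| + 2*r) := by
    refine le_trans (measure_mono hU) ?_
    rw [Real.volume_Icc]
    apply le_of_eq
    congr 1
    have h := max_sub_min_eq_abs x₁ x₂
    rw [abs_sub_comm] at h
    simp only [lo, hi]
    linarith
  have hsum : ENNReal.ofReal (3*r) ≤ volume (A ∪ C) + volume (C ∩ A) := by
    have h := measure_union_add_inter (μ := (volume : Measure ℝ)) A hC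
    rw [inter_comm] at h
    calc ENNReal.ofReal (3*r) = ENNReal.ofReal (3/2*r) + ENNReal.ofReal (3/2*r) := by
          rw [← ENNReal.ofReal_add (by linarith) (by linarith)]; congr 1; ring
      _ ≤ volume A + volume C := add_le_add hA2 hC2
      _ = volume (A ∪ C) + volume (C ∩ A) := h.symm
  have h2 : ENNReal.ofReal (3*r) - ENNReal.ofReal (|x₁ - x₂| + 2*r) ≤ volume (C ∩ A) := by
    rw [tsub_le_iff_right, add_comm]
    exact hsum.trans (add_le_add_left hvolU _)
  refine le_trans (le_of_eq ?_) h2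
  rw [← ENNReal.ofReal_sub _ (by positivity)]
  congr 1
  ring

lemma chainB {r x₁ x₂ : ℝ} (hr : 0 < r) {A B : Set ℝ}
    (hA : MeasurableSet A) (hB : MeasurableSet B)
    (hA1 : A ⊆ Icc (x₁ - r) (x₁ + r)) (hB1 : B ⊆ Icc (x₂ - r) (x₂ + r))
    (hA2 : ENNReal.ofReal (3/2*r) ≤ volume A) (hB2 : ENNReal.ofReal (3/2*r) ≤ volume B)
    {S : Set ℝ} (hS : MeasurableSet S) :
    ∫⁻ z, (S.indicator (fun _ => (1:ℝ≥0∞)) z) * ENNReal.ofReal (r^2 * triDensity r (z - (x₁+x₂)))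
      ≤ ∫⁻ x in A, volume ({y | x + y ∈ S} ∩ B) := by
  have hSmem : ∀ x : ℝ, MeasurableSet {y : ℝ | x + y ∈ S} := by
    intro x
    have he : {y : ℝ | x + y ∈ S} = (fun y => x + y) ⁻¹' S := rfl
    rw [he]; exact (measurable_const_add x) hS
  have step1 : ∀ x : ℝ, volume ({y | x + y ∈ S} ∩ B)
      = ∫⁻ z, (S.indicator (fun _ => (1:ℝ≥0∞)) z) * (B.indicator (fun _ => (1:ℝ≥0∞)) (z - x)) := by
    intro x
    rw [← lintegral_indicator_one ((hSmem x).inter hB)]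
    rw [← lintegral_add_right_eq_self
      (f := fun z => (S.indicator (fun _ => (1:ℝ≥0∞)) z) * (B.indicator (fun _ => (1:ℝ≥0∞)) (z - x))) x]
    congr 1
    funext y
    by_cases h1 : x + y ∈ S <;> by_cases h2 : y ∈ B <;>
      simp [Set.indicator, h1, h2, add_comm y x, mem_setOf_eq]
  simp_rw [step1]
  rw [lintegral_lintegral_swap]
  swap
  · apply Measurable.aemeasurable
    exact (((measurable_const.indicator hS).comp measurable_snd).mul
      ((measurable_const.indicator hB).comp (measurable_snd.sub measurable_fst)))
  refine lintegral_mono fun z => ?_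
  rw [lintegral_const_mul _ (show Measurable fun x : ℝ => B.indicator (fun _ => (1:ℝ≥0∞)) (z - x)
    from (measurable_const.indicator hB).comp (measurable_const_sub z))]
  refine mul_le_mul_right ?_ _
  have hpre : ∀ x : ℝ, B.indicator (fun _ => (1:ℝ≥0∞)) (z - x)
      = ((fun x => z - x) ⁻¹' B).indicator (1 : ℝ → ℝ≥0∞) x := by
    intro x
    by_cases h : z - x ∈ B <;> simp [Set.indicator, mem_preimage, h]
  simp_rw [hpre]
  have hCm : MeasurableSet ((fun x => z - x) ⁻¹' B) := (measurable_const_sub z) hB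
  rw [lintegral_indicator_one hCm, Measure.restrict_apply hCm]
  have hC1 : ((fun x => z - x) ⁻¹' B) ⊆ Icc ((z - x₂) - r) ((z - x₂) + r) := by
    intro x hx
    have := hB1 hx
    simp only [mem_Icc] at this ⊢
    constructor <;> linarith [this.1, this.2]
  have hC2 : ENNReal.ofReal (3/2*r) ≤ volume ((fun x => z - x) ⁻¹' B) := by
    rw [(Measure.measurePreserving_sub_left (volume : Measure ℝ) z).measure_preimage
      hB.nullMeasurableSet]
    exact hB2
  have hkey := pointwise_bound (x₁ := z - x₂) (x₂ := x₁) hr hA hC1 hA1 hC2 hA2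
  rw [tri_scale hr]
  calc ENNReal.ofReal (max (r - |z - (x₁ + x₂)|) 0)
      ≤ ENNReal.ofReal (r - |(z - x₂) - x₁|) := by
        rcases le_or_gt (r - |z - (x₁+x₂)|) 0 with h | h
        · rw [max_eq_right h]; simp
        · rw [max_eq_left h.le]
          apply ENNReal.ofReal_le_ofReal
          have : |(z - x₂) - x₁| = |z - (x₁ + x₂)| := by congr 1; ring
          rw [this]
    _ ≤ volume (A ∩ ((fun x => z - x) ⁻¹' B)) := hkey
    _ = volume (((fun x => z - x) ⁻¹' B) ∩ A) := by rw [inter_comm]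

theorem stmt4 (F₁ F₂ : Measure ℝ) [IsProbabilityMeasure F₁] [IsProbabilityMeasure F₂]
    (h₁ : 0 < acMass F₁) (h₂ : 0 < acMass F₂) :
    ∃ (a u θ : ℝ) (H : Measure ℝ), 0 < a ∧ θ ∈ Set.Ioc (0 : ℝ) 1 ∧
      IsProbabilityMeasure H ∧
      F₁.conv F₂
        = ENNReal.ofReal (1 - θ) • H
          + ENNReal.ofReal θ • ((triMeasure a).conv (Measure.dirac u)) := by
  obtain ⟨c₁, x₁, A₁, hc₁, hA₁m, hle₁, htend₁⟩ := exists_density_piece F₁ h₁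
  obtain ⟨c₂, x₂, A₂, hc₂, hA₂m, hle₂, htend₂⟩ := exists_density_piece F₂ h₂
  -- choose a common small radius r
  have h34 : (3/4 : ℝ≥0∞) < 1 :=
    (ENNReal.div_lt_iff (Or.inl (by norm_num)) (Or.inl (by norm_num))).2 (by norm_num)
  have hev₁ := htend₁.eventually (eventually_gt_nhds h34)
  have hev₂ := htend₂.eventually (eventually_gt_nhds h34)
  obtain ⟨r, ⟨hr₁, hr₂⟩, hr⟩ := ((hev₁.and hev₂).and (eventually_mem_nhdsWithin (s := Ioi 0))).exists
  rw [mem_Ioi] at hr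
  -- the good sets
  set A := A₁ ∩ Metric.closedBall x₁ r with hAdef
  set B := A₂ ∩ Metric.closedBall x₂ r with hBdef
  have hball : ∀ y : ℝ, Metric.closedBall y r = Icc (y - r) (y + r) := fun y =>
    Real.closedBall_eq_Icc
  have hvolball : ∀ y : ℝ, volume (Metric.closedBall y r) = ENNReal.ofReal (2*r) := by
    intro y
    rw [hball, Real.volume_Icc]
    congr 1; ring
  have hAm : MeasurableSet A := hA₁m.inter measurableSet_closedBall
  have hBm : MeasurableSet B := hA₂m.inter measurableSet_closedBall
  have hA1 : A ⊆ Icc (x₁ - r) (x₁ + r) := by rw [← hball]; exact inter_subset_right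
  have hB1 : B ⊆ Icc (x₂ - r) (x₂ + r) := by rw [← hball]; exact inter_subset_right
  have hvol : ∀ (y : ℝ) (A' : Set ℝ), (3/4 : ℝ≥0∞) < volume (A' ∩ Metric.closedBall y r) /
      volume (Metric.closedBall y r) → ENNReal.ofReal (3/2*r) ≤ volume (A' ∩ Metric.closedBall y r) := by
    intro y A' hlt
    have hd0 : volume (Metric.closedBall y r) ≠ 0 := by
      rw [hvolball]; simp [ENNReal.ofReal_eq_zero]; linarith
    have hdt : volume (Metric.closedBall y r) ≠ ⊤ := by rw [hvolball]; exact ENNReal.ofReal_ne_top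
    have := (ENNReal.lt_div_iff_mul_lt (Or.inl hd0) (Or.inl hdt)).1 hlt
    refine le_trans (le_of_eq ?_) this.le
    rw [hvolball]
    rw [show (3/4 : ℝ≥0∞) = ENNReal.ofReal (3/4) by
      rw [ENNReal.ofReal_div_of_pos (by norm_num)]; norm_num]
    rw [← ENNReal.ofReal_mul (by norm_num)]
    congr 1; ring
  have hA2 : ENNReal.ofReal (3/2*r) ≤ volume A := hvol x₁ A₁ hr₁
  have hB2 : ENNReal.ofReal (3/2*r) ≤ volume B := hvol x₂ A₂ hr₂
  -- restricted measures still below F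
  have hsm : ∀ (c : ℝ≥0∞) (μ ν : Measure ℝ), μ ≤ ν → c • μ ≤ c • ν := fun c μ ν h =>
    Measure.le_iff.2 fun S hS => by
      rw [Measure.smul_apply, Measure.smul_apply]
      exact mul_le_mul_right (Measure.le_iff.1 h S hS) c
  have hle₁' : (ENNReal.ofReal c₁) • volume.restrict A ≤ F₁ :=
    le_trans (hsm _ _ _ (Measure.restrict_mono inter_subset_left le_rfl)) hle₁
  have hle₂' : (ENNReal.ofReal c₂) • volume.restrict B ≤ F₂ :=
    le_trans (hsm _ _ _ (Measure.restrict_mono inter_subset_left le_rfl)) hle₂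
  -- parameters
  set u : ℝ := x₁ + x₂
  set θ : ℝ := min (c₁ * c₂ * r^2) (1/2) with hθdef
  have hθpos : 0 < θ := by
    apply lt_min _ (by norm_num)
    positivity
  have hθhalf : θ ≤ 1/2 := min_le_right _ _
  have hθ1 : 0 < 1 - θ := by linarith
  haveI : IsProbabilityMeasure (triMeasure r) := tri_prob hr
  set K : Measure ℝ := (triMeasure r).conv (Measure.dirac u) with hKdef
  haveI hKprob : IsProbabilityMeasure K := by
    rw [hKdef]; infer_instance
  -- the key measure inequality
  have hKle : (ENNReal.ofReal θ) • K ≤ F₁.conv F₂ := by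
    refine Measure.le_iff.2 fun S hS => ?_
    rw [Measure.smul_apply, smul_eq_mul, hKdef, triConvDirac_apply hr u hS]
    set I := ∫⁻ z, (S.indicator (fun _ => (1:ℝ≥0∞)) z) * ENNReal.ofReal (triDensity r (z - u))
    have hchain := chainB hr hAm hBm hA1 hB1 hA2 hB2 hS
    have hI : ∫⁻ z, (S.indicator (fun _ => (1:ℝ≥0∞)) z)
        * ENNReal.ofReal (r^2 * triDensity r (z - u))
        = ENNReal.ofReal (r^2) * I := by
      rw [← lintegral_const_mul' _ _ ENNReal.ofReal_ne_top]
      congr 1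
      funext z
      rw [ENNReal.ofReal_mul (by positivity)]
      ring
    have hmain : ENNReal.ofReal (c₁ * c₂ * r^2) * I ≤ (F₁.conv F₂) S := by
      have hstep : (F₁.conv F₂) S ≥ ENNReal.ofReal c₁ * (ENNReal.ofReal c₂
          * ∫⁻ x in A, volume ({y | x + y ∈ S} ∩ B)) := by
        rw [my_conv_apply _ _ hS]
        calc ENNReal.ofReal c₁ * (ENNReal.ofReal c₂ * ∫⁻ x in A, volume ({y | x + y ∈ S} ∩ B))
            = ENNReal.ofReal c₁ * ∫⁻ x in A, ENNReal.ofReal c₂ * volume ({y | x + y ∈ S} ∩ B) := by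
              rw [lintegral_const_mul' _ _ ENNReal.ofReal_ne_top]
          _ = ∫⁻ x, ENNReal.ofReal c₂ * volume ({y | x + y ∈ S} ∩ B)
                ∂((ENNReal.ofReal c₁) • volume.restrict A) := by
              rw [lintegral_smul_measure, smul_eq_mul]
          _ ≤ ∫⁻ x, ENNReal.ofReal c₂ * volume ({y | x + y ∈ S} ∩ B) ∂F₁ :=
              lintegral_mono' hle₁' le_rfl
          _ ≤ ∫⁻ x, F₂ {y | x + y ∈ S} ∂F₁ := by
              refine lintegral_mono fun x => ?_
              have hm : MeasurableSet {y : ℝ | x + y ∈ S} := by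
                have he : {y : ℝ | x + y ∈ S} = (fun y => x + y) ⁻¹' S := rfl
                rw [he]; exact (measurable_const_add x) hS
              have := Measure.le_iff.1 hle₂' _ hm
              rw [Measure.smul_apply, Measure.restrict_apply hm, smul_eq_mul] at this
              exact this
      calc ENNReal.ofReal (c₁ * c₂ * r^2) * I
          = ENNReal.ofReal c₁ * (ENNReal.ofReal c₂ * (ENNReal.ofReal (r^2) * I)) := by
            rw [ENNReal.ofReal_mul (by positivity), ENNReal.ofReal_mul (by positivity)]
            ring
        _ ≤ ENNReal.ofReal c₁ * (ENNReal.ofReal c₂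
              * ∫⁻ x in A, volume ({y | x + y ∈ S} ∩ B)) := by
            rw [← hI]
            exact mul_le_mul_right (mul_le_mul_right hchain _) _
        _ ≤ (F₁.conv F₂) S := hstep
    refine le_trans ?_ hmain
    exact mul_le_mul_left (ENNReal.ofReal_le_ofReal (min_le_left _ _)) _
  -- build H
  haveI : IsFiniteMeasure ((ENNReal.ofReal θ) • K) := by
    constructor
    rw [Measure.smul_apply, measure_univ, smul_eq_mul, mul_one]
    exact ENNReal.ofReal_lt_top
  set M : Measure ℝ := F₁.conv F₂ - (ENNReal.ofReal θ) • K with hMdef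
  have hc0 : ENNReal.ofReal (1 - θ) ≠ 0 := by
    simp [ENNReal.ofReal_eq_zero]; linarith
  have hct : ENNReal.ofReal (1 - θ) ≠ ⊤ := ENNReal.ofReal_ne_top
  set H : Measure ℝ := (ENNReal.ofReal (1 - θ))⁻¹ • M with hHdef
  have hMuniv : M Set.univ = ENNReal.ofReal (1 - θ) := by
    rw [hMdef, Measure.sub_apply MeasurableSet.univ hKle, Measure.smul_apply, measure_univ,
      measure_univ, smul_eq_mul, mul_one]
    rw [ENNReal.ofReal_sub _ (le_of_lt hθpos), ENNReal.ofReal_one]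
  have hHprob : IsProbabilityMeasure H := by
    constructor
    rw [hHdef, Measure.smul_apply, hMuniv, smul_eq_mul, ENNReal.inv_mul_cancel hc0 hct]
  refine ⟨r, u, θ, H, hr, ⟨hθpos, by linarith⟩, hHprob, ?_⟩
  have hMH : ENNReal.ofReal (1 - θ) • H = M := by
    rw [hHdef, smul_smul, ENNReal.mul_inv_cancel hc0 hct, one_smul]
  rw [hMH, hMdef, ← hKdef]
  exact (Measure.sub_add_cancel_of_le hKle).symm
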